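/- Suppose the Markov chain p is irreducible, K_1 (as in the hitting probability theorem) is finite, and limsup_{v} h(v) = 0 along any enumeration exhausting V. Then for a transfinite rotor walk started at a (restarted at a after each escape to infinity) and any transfinite time tau = m*omega + t at which every vertex has been visited finitely often, |h(a) - n_tau(b)/(n_tau(b)+n_tau(c)+m)| <= K_1/(n_tau(b)+n_tau(c)+m). -/

import Mathlib

open scoped BigOperators Classical

/-- `(x, r)` is a rotor walk for the rotor mechanism `(d, succ)`.  Rotor values are
`0`-based: rotor value `j` at `u` means the rotor points to `succ u j`
(corresponding to `u^(j+1)` in `1`-based notation).  At each step the rotor at the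
current particle position is incremented cyclically and the particle moves in the
new rotor direction. -/
def IsRotorWalk {V : Type*} (d : V → ℕ) (succ : V → ℕ → V)
    (x : ℕ → V) (r : ℕ → V → ℕ) : Prop :=
  (∀ v, r 0 v < d v) ∧
  (∀ t, r (t + 1) (x t) = (r t (x t) + 1) % d (x t)) ∧
  (∀ t v, v ≠ x t → r (t + 1) v = r t v) ∧
  (∀ t, x (t + 1) = succ (x t) (r (t + 1) (x t)))

/-- the number of visits of the walk `x` to `v` strictly before time `t` -/
noncomputable def nvisits {V : Type*} (x : ℕ → V) (t : ℕ) (v : V) : ℕ :=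
  ((Finset.range t).filter fun s => x s = v).card

/-- the rotor mechanism `(d, succ)` realizes the transition kernel `p`:
`p u v` is the proportion of the `d u` successors of `u` equal to `v` -/
def Realizes {V : Type*} (d : V → ℕ) (succ : V → ℕ → V) (p : V → V → ℝ) : Prop :=
  (∀ u, 0 < d u) ∧
  ∀ u v, p u v = ((Finset.range (d u)).filter fun i => succ u i = v).card / d u

/-- `hitAux p b c t v` is the probability, for the Markov chain with kernel `p`
started at `v`, of hitting `b` before hitting `c` and within `t` steps. -/
noncomputable def hitAux {V : Type*} (p : V → V → ℝ) (b c : V) : ℕ → V → ℝ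
  | 0, v => if v = b then 1 else 0
  | t + 1, v => if v = b then 1 else if v = c then 0 else ∑' w, p v w * hitAux p b c t w

/-- the hitting probability `h_{b,c}(v) = P_v(T_b < T_c)`, as the monotone limit of the
probabilities of hitting `b` before `c` within `t` steps.  (Taking `b = c` gives the
single-target hitting probability `P_v(T_b < ∞)`.) -/
noncomputable def hitProb {V : Type*} (p : V → V → ℝ) (b c : V) (v : V) : ℝ :=
  ⨆ t, hitAux p b c t v

/-- the escape probability `e_{u,v} = P_u(T_v < T_u^+)`: a first step from `u` to `w`,
then hit `v` before `u`. -/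
noncomputable def escProb {V : Type*} (p : V → V → ℝ) (u v : V) : ℝ :=
  ∑' w, p u w * hitProb p v u w

/-- irreducibility of the kernel: any vertex can be reached from any other by a path of
positive-probability steps -/
def IrreducibleKernel {V : Type*} (p : V → V → ℝ) : Prop :=
  ∀ u v : V, ∃ (n : ℕ) (f : ℕ → V), f 0 = u ∧ f n = v ∧ ∀ i < n, 0 < p (f i) (f (i + 1))

/-- A transfinite rotor walk started at `a`: a (finite or infinite) sequence of rotor
walks `X m`, each started at `a`; every walk strictly before stage `M` is transient and
the next walk starts from its limiting rotor configuration; if `M` is finite, the walk at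
stage `M` is recurrent (so the transfinite walk stops evolving there). -/
structure TransRW {V : Type*} (d : V → ℕ) (succ : V → ℕ → V) (a : V) where
  M : ℕ∞
  X : ℕ → ℕ → V
  R : ℕ → ℕ → V → ℕ
  walk : ∀ m : ℕ, (m : ℕ∞) ≤ M → IsRotorWalk d succ (X m) (R m) ∧ X m 0 = a
  transient : ∀ m : ℕ, (m : ℕ∞) < M → ∀ v, {t | X m t = v}.Finite
  limit : ∀ m : ℕ, (m : ℕ∞) < M → ∀ v, ∃ T, ∀ t, T ≤ t → R m t v = R (m + 1) 0 v
  last_recurrent : ∀ m : ℕ, (m : ℕ∞) = M → ∀ v, {t | X m t = v}.Infinite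

/-- `ntau W m t v` is the number of visits to `v` before the transfinite time
`τ = m·ω + t`: all visits during the first `m` (completed) walks, plus the visits of the
`m`-th walk before time `t`. -/
noncomputable def ntau {V : Type*} {d : V → ℕ} {succ : V → ℕ → V} {a : V}
    (W : TransRW d succ a) (m t : ℕ) (v : V) : ℕ :=
  (∑ m' ∈ Finset.range m, {s | W.X m' s = v}.ncard) + nvisits (W.X m) t v

section HP
variable {V : Type*} {d : V → ℕ} {succ : V → ℕ → V} {p : V → V → ℝ}

lemma Realizes.p_nonneg (hreal : Realizes d succ p) (u v : V) : 0 ≤ p u v := by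
  rw [hreal.2]; positivity

lemma Realizes.tsum_mul (hreal : Realizes d succ p) (u : V) (f : V → ℝ) :
    ∑' w, p u w * f w = (∑ j ∈ Finset.range (d u), f (succ u j)) / (d u : ℝ) := by
  classical
  have h0 : ∀ w ∉ (Finset.range (d u)).image (succ u), p u w * f w = 0 := by
    intro w hw
    have he : (Finset.range (d u)).filter (fun i => succ u i = w) = ∅ := by
      ext i
      simp only [Finset.mem_filter, Finset.mem_range, Finset.notMem_empty, iff_false, not_and]
      intro hi hsi
      exact hw (Finset.mem_image.2 ⟨i, Finset.mem_range.2 hi, hsi⟩)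
    rw [hreal.2, he]
    simp
  rw [tsum_eq_sum h0]
  have hc := Finset.sum_comp (fun w => f w / (d u : ℝ)) (succ u) (s := Finset.range (d u))
  rw [Finset.sum_div, hc]
  refine Finset.sum_congr rfl fun w _ => ?_
  rw [hreal.2, nsmul_eq_mul]
  ring

lemma hitAux_zero (b c v : V) : hitAux p b c 0 v = if v = b then 1 else 0 := rfl

lemma hitAux_succ (b c v : V) (t : ℕ) : hitAux p b c (t + 1) v =
    if v = b then 1 else if v = c then 0 else ∑' w, p v w * hitAux p b c t w := rfl

lemma hitAux_nonneg (hreal : Realizes d succ p) (b c : V) :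
    ∀ t v, 0 ≤ hitAux p b c t v := by
  intro t
  induction t with
  | zero => intro v; rw [hitAux_zero]; split <;> norm_num
  | succ t ih =>
    intro v
    rw [hitAux_succ]
    split
    · norm_num
    split
    · norm_num
    exact tsum_nonneg fun w => mul_nonneg (hreal.p_nonneg v w) (ih w)

lemma hitAux_le_one (hreal : Realizes d succ p) (b c : V) :
    ∀ t v, hitAux p b c t v ≤ 1 := by
  intro t
  induction t with
  | zero => intro v; rw [hitAux_zero]; split <;> norm_num
  | succ t ih =>
    intro v
    rw [hitAux_succ]
    split
    · norm_num
    split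
    · norm_num
    rw [hreal.tsum_mul]
    have hd : (0:ℝ) < d v := by exact_mod_cast hreal.1 v
    rw [div_le_one hd]
    calc ∑ j ∈ Finset.range (d v), hitAux p b c t (succ v j)
        ≤ ∑ _j ∈ Finset.range (d v), (1:ℝ) := Finset.sum_le_sum fun j _ => ih _
      _ = d v := by simp

lemma hitAux_mono (hreal : Realizes d succ p) (b c : V) :
    ∀ t v, hitAux p b c t v ≤ hitAux p b c (t + 1) v := by
  intro t
  induction t with
  | zero =>
    intro v
    by_cases hb : v = b
    · rw [hitAux_zero, hitAux_succ, if_pos hb, if_pos hb]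
    · rw [hitAux_zero, if_neg hb]
      exact hitAux_nonneg hreal b c 1 v
  | succ t ih =>
    intro v
    rw [hitAux_succ, hitAux_succ]
    split
    · exact le_rfl
    · split
      · exact le_rfl
      · rw [hreal.tsum_mul, hreal.tsum_mul]
        gcongr
        exact ih _

end HP

open Filter

section HP2
variable {V : Type*} {d : V → ℕ} {succ : V → ℕ → V} {p : V → V → ℝ}
variable (hreal : Realizes d succ p) (b c : V)

include hreal in
lemma bddAbove_hitAux (v : V) : BddAbove (Set.range fun t => hitAux p b c t v) := by
  refine ⟨1, ?_⟩
  rintro x ⟨t, rfl⟩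
  exact hitAux_le_one hreal b c t v

include hreal in
lemma hitAux_monotone (v : V) : Monotone fun t => hitAux p b c t v :=
  monotone_nat_of_le_succ fun t => hitAux_mono hreal b c t v

include hreal in
lemma tendsto_hitAux (v : V) :
    Tendsto (fun t => hitAux p b c t v) atTop (nhds (hitProb p b c v)) :=
  tendsto_atTop_ciSup (hitAux_monotone hreal b c v) (bddAbove_hitAux hreal b c v)

include hreal in
lemma hitProb_nonneg (v : V) : 0 ≤ hitProb p b c v :=
  le_trans (hitAux_nonneg hreal b c 0 v) (le_ciSup (bddAbove_hitAux hreal b c v) 0)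

include hreal in
lemma hitProb_le_one (v : V) : hitProb p b c v ≤ 1 :=
  ciSup_le fun t => hitAux_le_one hreal b c t v

lemma hitProb_b : hitProb p b c b = 1 := by
  have h1 : ∀ t, hitAux p b c t b = 1 := by
    intro t
    cases t with
    | zero => rw [hitAux_zero]; simp
    | succ t => rw [hitAux_succ]; simp
  unfold hitProb
  simp only [h1, ciSup_const]

lemma hitProb_c (hbc : b ≠ c) : hitProb p b c c = 0 := by
  have h1 : ∀ t, hitAux p b c t c = 0 := by
    intro t
    cases t with
    | zero => rw [hitAux_zero, if_neg (Ne.symm hbc)]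
    | succ t => rw [hitAux_succ, if_neg (Ne.symm hbc), if_pos rfl]
  unfold hitProb
  simp only [h1, ciSup_const]

include hreal in
lemma hitProb_harmonic (u : V) (hub : u ≠ b) (huc : u ≠ c) :
    hitProb p b c u = (∑ j ∈ Finset.range (d u), hitProb p b c (succ u j)) / (d u : ℝ) := by
  have h1 : Tendsto (fun t => hitAux p b c (t + 1) u) atTop (nhds (hitProb p b c u)) :=
    (tendsto_add_atTop_iff_nat (f := fun t => hitAux p b c t u) 1).2
      (tendsto_hitAux hreal b c u)
  have h2 : (fun t => hitAux p b c (t + 1) u)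
      = fun t => (∑ j ∈ Finset.range (d u), hitAux p b c t (succ u j)) / (d u : ℝ) := by
    funext t
    rw [hitAux_succ, if_neg hub, if_neg huc, hreal.tsum_mul]
  rw [h2] at h1
  have h3 : Tendsto (fun t => (∑ j ∈ Finset.range (d u), hitAux p b c t (succ u j)) / (d u : ℝ))
      atTop (nhds ((∑ j ∈ Finset.range (d u), hitProb p b c (succ u j)) / (d u : ℝ))) :=
    (tendsto_finset_sum _ fun j _ => tendsto_hitAux hreal b c (succ u j)).div_const _
  exact tendsto_nhds_unique h1 h3

include hreal in
lemma sum_e_zero (u : V) (hub : u ≠ b) (huc : u ≠ c) :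
    ∑ j ∈ Finset.range (d u), (hitProb p b c (succ u j) - hitProb p b c u) = 0 := by
  have hd : (0:ℝ) < d u := by exact_mod_cast hreal.1 u
  have := hitProb_harmonic hreal b c u hub huc
  rw [eq_div_iff (ne_of_gt hd)] at this
  rw [Finset.sum_sub_distrib, Finset.sum_const, Finset.card_range, nsmul_eq_mul, ← this]
  ring

end HP2

noncomputable def Gf (e : ℕ → ℝ) (D : ℕ) (ρ n : ℕ) : ℝ :=
  ∑ i ∈ Finset.range n, e ((ρ + 1 + i) % D)

lemma Gf_zero (e : ℕ → ℝ) (D ρ : ℕ) : Gf e D ρ 0 = 0 := by simp [Gf]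

lemma Gf_succ (e : ℕ → ℝ) (D ρ n : ℕ) :
    Gf e D ρ (n + 1) = Gf e D ρ n + e ((ρ + 1 + n) % D) := by
  rw [Gf, Finset.sum_range_succ]; rfl

lemma Gf_add (e : ℕ → ℝ) (D ρ m n : ℕ) :
    Gf e D ρ (m + n) = Gf e D ρ m + Gf e D (ρ + m) n := by
  rw [Gf, Finset.sum_range_add]
  congr 1
  refine Finset.sum_congr rfl fun i _ => ?_
  have : ρ + 1 + (m + i) = ρ + m + 1 + i := by ring
  rw [this]

lemma Gf_mod (e : ℕ → ℝ) (D ρ n : ℕ) : Gf e D (ρ % D) n = Gf e D ρ n := by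
  refine Finset.sum_congr rfl fun i _ => ?_
  have : ρ % D + 1 + i = ρ % D + (1 + i) := by ring
  have h2 : ρ + 1 + i = ρ + (1 + i) := by ring
  rw [this, h2, Nat.mod_add_mod]

lemma window_sum (f : ℕ → ℝ) (D : ℕ) (hD : 0 < D) :
    ∀ k, ∑ i ∈ Finset.range D, f ((k + i) % D) = ∑ j ∈ Finset.range D, f j := by
  intro k
  induction k with
  | zero =>
    refine Finset.sum_congr rfl fun i hi => ?_
    rw [Nat.zero_add, Nat.mod_eq_of_lt (Finset.mem_range.1 hi)]
  | succ k ih =>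
    set A : ℕ → ℝ := fun i => f ((k + i) % D) with hA
    have e1 : ∑ i ∈ Finset.range D, f ((k + 1 + i) % D) = ∑ i ∈ Finset.range D, A (i + 1) := by
      refine Finset.sum_congr rfl fun i _ => ?_
      simp only [hA]
      congr 2
      ring
    have e2 := Finset.sum_range_succ' A D
    have e3 := Finset.sum_range_succ A D
    have e4 : A D = A 0 := by
      simp only [hA, Nat.add_zero]
      congr 1
      exact Nat.add_mod_right k D
    rw [e1]
    rw [e3] at e2
    have : ∑ i ∈ Finset.range D, A (i + 1) = ∑ i ∈ Finset.range D, A i := by linarith [e2, e4]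
    rw [this]
    exact ih

lemma Gf_cycle (e : ℕ → ℝ) (D : ℕ) (hD : 0 < D)
    (hzero : ∑ j ∈ Finset.range D, e j = 0) (ρ : ℕ) : Gf e D ρ D = 0 := by
  have : Gf e D ρ D = ∑ i ∈ Finset.range D, e ((ρ + 1 + i) % D) := rfl
  rw [this, window_sum e D hD (ρ + 1), hzero]

lemma Gf_reduce (e : ℕ → ℝ) (D : ℕ) (hD : 0 < D)
    (hzero : ∑ j ∈ Finset.range D, e j = 0) (ρ n : ℕ) : Gf e D ρ n = Gf e D ρ (n % D) := by
  have key : ∀ q a, Gf e D ρ (a + D * q) = Gf e D ρ a := by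
    intro q
    induction q with
    | zero => simp
    | succ q ih =>
      intro a
      have : a + D * (q + 1) = (a + D * q) + D := by ring
      rw [this, Gf_add, Gf_cycle e D hD hzero, ih, add_zero]
  conv_lhs => rw [← Nat.mod_add_div n D]
  exact key _ _

lemma Gf_abs (e : ℕ → ℝ) (D : ℕ) (hD : 0 < D)
    (hzero : ∑ j ∈ Finset.range D, e j = 0) (ρ n : ℕ) :
    |Gf e D ρ n| ≤ (1 / 2) * ∑ j ∈ Finset.range D, |e j| := by
  rw [Gf_reduce e D hD hzero]
  set s := n % D with hs
  have hsD : s ≤ D := le_of_lt (Nat.mod_lt _ hD)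
  have hsplit : Gf e D ρ D = Gf e D ρ s + Gf e D (ρ + s) (D - s) := by
    rw [← Gf_add]
    congr 1
    omega
  have hcyc := Gf_cycle e D hD hzero ρ
  have h0 : Gf e D ρ s = - Gf e D (ρ + s) (D - s) := by
    rw [hcyc] at hsplit; linarith
  have b1 : |Gf e D ρ s| ≤ Gf (fun j => |e j|) D ρ s :=
    Finset.abs_sum_le_sum_abs _ _
  have b2 : |Gf e D (ρ + s) (D - s)| ≤ Gf (fun j => |e j|) D (ρ + s) (D - s) :=
    Finset.abs_sum_le_sum_abs _ _
  have b3 : Gf (fun j => |e j|) D ρ D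
      = Gf (fun j => |e j|) D ρ s + Gf (fun j => |e j|) D (ρ + s) (D - s) := by
    rw [← Gf_add]
    congr 1
    omega
  have b4 : Gf (fun j => |e j|) D ρ D = ∑ j ∈ Finset.range D, |e j| := by
    simp only [Gf]
    exact window_sum (fun j => |e j|) D hD (ρ + 1)
  have h1 : |Gf e D ρ s| ≤ Gf (fun j => |e j|) D (ρ + s) (D - s) := by
    rw [h0, abs_neg]; exact b2
  linarith

section RW
variable {V : Type*} {d : V → ℕ} {succ : V → ℕ → V} {x : ℕ → V} {r : ℕ → V → ℕ}

lemma nvisits_zero (x : ℕ → V) (v : V) : nvisits x 0 v = 0 := by simp [nvisits]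

lemma nvisits_succ (x : ℕ → V) (T : ℕ) (v : V) :
    nvisits x (T + 1) v = nvisits x T v + if x T = v then 1 else 0 := by
  classical
  unfold nvisits
  rw [Finset.range_add_one, Finset.filter_insert]
  split_ifs with h
  · rw [Finset.card_insert_of_notMem (fun hmem => by
      simpa using (Finset.mem_filter.1 hmem).1)]
  · rw [add_zero]

lemma rotor_formula (hw : IsRotorWalk d succ x r) :
    ∀ T v, r T v = (r 0 v + nvisits x T v) % d v := by
  intro T
  induction T with
  | zero =>
    intro v
    rw [nvisits_zero, Nat.add_zero, Nat.mod_eq_of_lt (hw.1 v)]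
  | succ T ih =>
    intro v
    by_cases hv : v = x T
    · subst hv
      rw [hw.2.1 T, ih, Nat.mod_add_mod, nvisits_succ, if_pos rfl, ← Nat.add_assoc]
    · rw [hw.2.2.1 T v hv, ih, nvisits_succ, if_neg (fun h => hv h.symm), Nat.add_zero]

end RW

section WI
variable {V : Type*} {d : V → ℕ} {succ : V → ℕ → V} {x : ℕ → V} {r : ℕ → V → ℕ}
variable {h : V → ℝ} {a b c : V}

/-- the per-vertex discrepancy bound -/
noncomputable def Dbd (d : V → ℕ) (succ : V → ℕ → V) (h : V → ℝ) (b c : V) (u : V) : ℝ :=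
  if u = b ∨ u = c then 0
  else (1 / 2) * ∑ j ∈ Finset.range (d u), |h (succ u j) - h u|

/-- the per-vertex rotor discrepancy -/
noncomputable def phiv (d : V → ℕ) (succ : V → ℕ → V) (h : V → ℝ) (b c : V)
    (ρ : V → ℕ) (n : V → ℕ) (u : V) : ℝ :=
  if u = b ∨ u = c then 0
  else Gf (fun j => h (succ u j) - h u) (d u) (ρ u) (n u)

lemma abs_phiv_le (hd : ∀ v, 0 < d v)
    (hharm : ∀ u, ¬(u = b ∨ u = c) →
      ∑ j ∈ Finset.range (d u), (h (succ u j) - h u) = 0)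
    (ρ n : V → ℕ) (u : V) :
    |phiv d succ h b c ρ n u| ≤ Dbd d succ h b c u := by
  unfold phiv Dbd
  split_ifs with hu
  · simp
  · exact Gf_abs _ _ (hd u) (hharm u hu) _ _

lemma walk_identity (hw : IsRotorWalk d succ x r) (hd : ∀ v, 0 < d v)
    (hdb : d b = 1) (hdc : d c = 1) (hsb : succ b 0 = a) (hsc : succ c 0 = a)
    (hb1 : h b = 1) (hc0 : h c = 0)
    (hbc : b ≠ c) :
    ∀ (T : ℕ) (F : Finset V), (∀ s, s < T → x s ∈ F) →
    h (x T) - h (x 0) =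
      (nvisits x T b : ℝ) * (h a - 1) + (nvisits x T c : ℝ) * h a +
      ∑ u ∈ F.filter (fun u => ¬(u = b ∨ u = c)),
        Gf (fun j => h (succ u j) - h u) (d u) (r 0 u) (nvisits x T u) := by
  classical
  intro T
  induction T with
  | zero =>
    intro F _
    simp [nvisits_zero, Gf_zero]
  | succ T ih =>
    intro F hF
    have hF' : ∀ s, s < T → x s ∈ F := fun s hs => hF s (Nat.lt_succ_of_lt hs)
    have e1 := ih F hF'
    have hxTF : x T ∈ F := hF T (Nat.lt_succ_self T)
    by_cases hb : x T = b
    · have h2 := hw.2.1 T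
      rw [hb, hdb, Nat.mod_one] at h2
      have hx1 : x (T + 1) = a := by rw [hw.2.2.2 T, hb, h2, hsb]
      have hnb : nvisits x (T + 1) b = nvisits x T b + 1 := by
        rw [nvisits_succ, if_pos hb]
      have hnc : nvisits x (T + 1) c = nvisits x T c := by
        rw [nvisits_succ, if_neg (fun hcc : x T = c => hbc (by rw [← hb]; exact hcc)), add_zero]
      have hsum' : ∑ u ∈ F.filter (fun u => ¬(u = b ∨ u = c)),
            Gf (fun j => h (succ u j) - h u) (d u) (r 0 u) (nvisits x (T + 1) u)
          = ∑ u ∈ F.filter (fun u => ¬(u = b ∨ u = c)),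
            Gf (fun j => h (succ u j) - h u) (d u) (r 0 u) (nvisits x T u) := by
        refine Finset.sum_congr rfl fun u hu => ?_
        have hQ := (Finset.mem_filter.1 hu).2
        rw [nvisits_succ, if_neg (fun hxu : x T = u => hQ (Or.inl (by rw [← hxu]; exact hb))),
          add_zero]
      rw [hx1, hnb, hnc, hsum']
      rw [hb, hb1] at e1
      push_cast
      linarith [e1]
    · by_cases hc : x T = c
      · have h2 := hw.2.1 T
        rw [hc, hdc, Nat.mod_one] at h2
        have hx1 : x (T + 1) = a := by rw [hw.2.2.2 T, hc, h2, hsc]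
        have hnc : nvisits x (T + 1) c = nvisits x T c + 1 := by
          rw [nvisits_succ, if_pos hc]
        have hnb : nvisits x (T + 1) b = nvisits x T b := by
          rw [nvisits_succ, if_neg (fun hbb : x T = b => hb hbb), add_zero]
        have hsum' : ∑ u ∈ F.filter (fun u => ¬(u = b ∨ u = c)),
              Gf (fun j => h (succ u j) - h u) (d u) (r 0 u) (nvisits x (T + 1) u)
            = ∑ u ∈ F.filter (fun u => ¬(u = b ∨ u = c)),
              Gf (fun j => h (succ u j) - h u) (d u) (r 0 u) (nvisits x T u) := by
          refine Finset.sum_congr rfl fun u hu => ?_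
          have hQ := (Finset.mem_filter.1 hu).2
          rw [nvisits_succ, if_neg (fun hxu : x T = u => hQ (Or.inr (by rw [← hxu]; exact hc))),
            add_zero]
        rw [hx1, hnb, hnc, hsum']
        rw [hc, hc0] at e1
        push_cast
        linarith [e1]
      · -- main case : x T ∉ {b, c}
        have hQ : ¬(x T = b ∨ x T = c) := by
          rintro (h1 | h1)
          exacts [hb h1, hc h1]
        have hmem : x T ∈ F.filter (fun u => ¬(u = b ∨ u = c)) :=
          Finset.mem_filter.2 ⟨hxTF, hQ⟩
        have hr1 : r (T + 1) (x T)
            = (r 0 (x T) + 1 + nvisits x T (x T)) % d (x T) := by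
          rw [hw.2.1 T, rotor_formula hw T (x T), Nat.mod_add_mod]
          congr 1
          ring
        have hx1 : x (T + 1)
            = succ (x T) ((r 0 (x T) + 1 + nvisits x T (x T)) % d (x T)) := by
          rw [hw.2.2.2 T, hr1]
        have hnb : nvisits x (T + 1) b = nvisits x T b := by
          rw [nvisits_succ, if_neg hb, add_zero]
        have hnc : nvisits x (T + 1) c = nvisits x T c := by
          rw [nvisits_succ, if_neg hc, add_zero]
        set f_new : V → ℝ := fun u =>
          Gf (fun j => h (succ u j) - h u) (d u) (r 0 u) (nvisits x (T + 1) u) with hfnew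
        set f_old : V → ℝ := fun u =>
          Gf (fun j => h (succ u j) - h u) (d u) (r 0 u) (nvisits x T u) with hfold
        have hsplit_new := Finset.sum_erase_add
          (F.filter (fun u => ¬(u = b ∨ u = c))) f_new hmem
        have hsplit_old := Finset.sum_erase_add
          (F.filter (fun u => ¬(u = b ∨ u = c))) f_old hmem
        have herase : ∑ u ∈ (F.filter (fun u => ¬(u = b ∨ u = c))).erase (x T), f_new u
            = ∑ u ∈ (F.filter (fun u => ¬(u = b ∨ u = c))).erase (x T), f_old u := by
          refine Finset.sum_congr rfl fun u hu => ?_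
          have hne : u ≠ x T := Finset.ne_of_mem_erase hu
          simp only [hfnew, hfold]
          rw [nvisits_succ, if_neg (fun hxu : x T = u => hne hxu.symm), add_zero]
        have hstep : f_new (x T) = f_old (x T) + (h (x (T + 1)) - h (x T)) := by
          simp only [hfnew, hfold]
          rw [nvisits_succ, if_pos rfl, Gf_succ, hx1]
        rw [hnb, hnc, ← hsplit_new, herase, hstep]
        linarith [e1, hsplit_old]

lemma walk_identity_tsum (hw : IsRotorWalk d succ x r) (hd : ∀ v, 0 < d v)
    (hdb : d b = 1) (hdc : d c = 1) (hsb : succ b 0 = a) (hsc : succ c 0 = a)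
    (hb1 : h b = 1) (hc0 : h c = 0) (hbc : b ≠ c) (T : ℕ) :
    h (x T) - h (x 0) =
      (nvisits x T b : ℝ) * (h a - 1) + (nvisits x T c : ℝ) * h a +
      ∑' u, phiv d succ h b c (r 0) (nvisits x T) u := by
  classical
  set F : Finset V := (Finset.range T).image x with hFdef
  have hF : ∀ s, s < T → x s ∈ F :=
    fun s hs => Finset.mem_image.2 ⟨s, Finset.mem_range.2 hs, rfl⟩
  have hoff : ∀ u ∉ F, phiv d succ h b c (r 0) (nvisits x T) u = 0 := by
    intro u hu
    unfold phiv
    split_ifs with hq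
    · rfl
    · have hn : nvisits x T u = 0 := by
        unfold nvisits
        rw [Finset.card_eq_zero, Finset.filter_eq_empty_iff]
        intro s hs hxs
        exact hu (Finset.mem_image.2 ⟨s, hs, hxs⟩)
      rw [hn, Gf_zero]
  rw [tsum_eq_sum hoff]
  have hsum : ∑ u ∈ F, phiv d succ h b c (r 0) (nvisits x T) u
      = ∑ u ∈ F.filter (fun u => ¬(u = b ∨ u = c)),
        Gf (fun j => h (succ u j) - h u) (d u) (r 0 u) (nvisits x T u) := by
    rw [Finset.sum_filter]
    refine Finset.sum_congr rfl fun u _ => ?_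
    unfold phiv
    by_cases hq : u = b ∨ u = c
    · rw [if_pos hq, if_neg (not_not_intro hq)]
    · rw [if_neg hq, if_pos hq]
  rw [hsum]
  exact walk_identity hw hd hdb hdc hsb hsc hb1 hc0 hbc T F hF

open Filter in
lemma nvisits_eventually (x : ℕ → V) (v : V) (hfin : {s | x s = v}.Finite) :
    ∀ᶠ T in atTop, nvisits x T v = {s | x s = v}.ncard := by
  classical
  set S := hfin.toFinset with hS
  refine eventually_atTop.2 ⟨(S.sup id) + 1, fun T hT => ?_⟩
  have hfe : (Finset.range T).filter (fun s => x s = v) = S := by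
    ext s
    simp only [Finset.mem_filter, Finset.mem_range, hS, Set.Finite.mem_toFinset,
      Set.mem_setOf_eq]
    constructor
    · rintro ⟨_, hv⟩; exact hv
    · intro hv
      refine ⟨?_, hv⟩
      have : s ≤ S.sup id := Finset.le_sup (f := id) (by
        rw [hS, Set.Finite.mem_toFinset]; exact hv)
      omega
  rw [nvisits, hfe, hS, Set.ncard_eq_toFinset_card _ hfin]

open Filter in
lemma tendsto_walk_cofinite (x : ℕ → V) (htrans : ∀ v, {s | x s = v}.Finite) :
    Tendsto x atTop cofinite := by
  intro s hs
  rw [mem_cofinite] at hs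
  have hfin : {T | x T ∈ sᶜ}.Finite := by
    have : {T | x T ∈ sᶜ} ⊆ ⋃ v ∈ sᶜ, {T | x T = v} := by
      intro T hT
      exact Set.mem_biUnion hT rfl
    exact Set.Finite.subset (hs.biUnion fun v _ => htrans v) this
  have := hfin.eventually_cofinite_notMem
  rw [Nat.cofinite_eq_atTop] at this
  rw [mem_map]
  filter_upwards [this] with T hT
  simpa using hT

open Filter in
lemma stage_limit (hw : IsRotorWalk d succ x r) (hd : ∀ v, 0 < d v)
    (hdb : d b = 1) (hdc : d c = 1) (hsb : succ b 0 = a) (hsc : succ c 0 = a)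
    (hb1 : h b = 1) (hc0 : h c = 0) (hbc : b ≠ c)
    (htrans : ∀ v, {s | x s = v}.Finite)
    (hlim : Tendsto h cofinite (nhds 0))
    (hsumD : Summable (Dbd d succ h b c))
    (hharm : ∀ u, ¬(u = b ∨ u = c) →
      ∑ j ∈ Finset.range (d u), (h (succ u j) - h u) = 0) :
    -(h (x 0)) = ({s | x s = b}.ncard : ℝ) * (h a - 1) + ({s | x s = c}.ncard : ℝ) * h a +
      ∑' u, phiv d succ h b c (r 0) (fun v => {s | x s = v}.ncard) u := by
  have T1 : Tendsto (fun T => h (x T) - h (x 0)) atTop (nhds (-(h (x 0)))) := by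
    have := (hlim.comp (tendsto_walk_cofinite x htrans)).sub_const (h (x 0))
    simpa using this
  have Tb : Tendsto (fun T => (nvisits x T b : ℝ)) atTop (nhds ({s | x s = b}.ncard : ℝ)) := by
    refine Tendsto.congr' ?_ tendsto_const_nhds
    filter_upwards [nvisits_eventually x b (htrans b)] with T hT
    rw [hT]
  have Tc : Tendsto (fun T => (nvisits x T c : ℝ)) atTop (nhds ({s | x s = c}.ncard : ℝ)) := by
    refine Tendsto.congr' ?_ tendsto_const_nhds
    filter_upwards [nvisits_eventually x c (htrans c)] with T hT
    rw [hT]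
  have Tphi : Tendsto (fun T => ∑' u, phiv d succ h b c (r 0) (nvisits x T) u) atTop
      (nhds (∑' u, phiv d succ h b c (r 0) (fun v => {s | x s = v}.ncard) u)) := by
    refine tendsto_tsum_of_dominated_convergence hsumD ?_ ?_
    · intro u
      refine Tendsto.congr' ?_ tendsto_const_nhds
      filter_upwards [nvisits_eventually x u (htrans u)] with T hT
      unfold phiv
      split_ifs with hq
      · rfl
      · rw [hT]
    · filter_upwards with T u
      rw [Real.norm_eq_abs]
      exact abs_phiv_le hd hharm _ _ u
  have T2 : Tendsto (fun T => (nvisits x T b : ℝ) * (h a - 1) + (nvisits x T c : ℝ) * h a +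
      ∑' u, phiv d succ h b c (r 0) (nvisits x T) u) atTop
      (nhds (({s | x s = b}.ncard : ℝ) * (h a - 1) + ({s | x s = c}.ncard : ℝ) * h a +
      ∑' u, phiv d succ h b c (r 0) (fun v => {s | x s = v}.ncard) u)) :=
    ((Tb.mul_const _).add (Tc.mul_const _)).add Tphi
  have heq : (fun T => h (x T) - h (x 0)) = fun T =>
      (nvisits x T b : ℝ) * (h a - 1) + (nvisits x T c : ℝ) * h a +
      ∑' u, phiv d succ h b c (r 0) (nvisits x T) u := by
    funext T
    exact walk_identity_tsum hw hd hdb hdc hsb hsc hb1 hc0 hbc T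
  rw [heq] at T1
  exact tendsto_nhds_unique T1 T2

end WI

/-- **Transfinite walks and hitting probabilities** (Theorem `hit-prob-tf`). -/
theorem transfinite_hitting_prob {V : Type*} [Countable V]
    (d : V → ℕ) (succ : V → ℕ → V) (p : V → V → ℝ)
    (hreal : Realizes d succ p) (hirr : IrreducibleKernel p)
    (a b c : V) (hbc : b ≠ c) (hab : a ≠ b) (hac : a ≠ c)
    (hpb : p b a = 1) (hpc : p c a = 1)
    (hdb : d b = 1) (hdc : d c = 1) (hsb : succ b 0 = a) (hsc : succ c 0 = a)
    (h : V → ℝ) (hh : h = hitProb p b c)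
    (hlim : Filter.Tendsto h Filter.cofinite (nhds 0))
    (K₁ : ℝ)
    (hsum : Summable fun uv : V × V =>
      if uv.1 = b ∨ uv.1 = c then 0
      else (d uv.1 : ℝ) * p uv.1 uv.2 * |h uv.1 - h uv.2|)
    (hK₁ : K₁ = 1 + (1 / 2) * ∑' uv : V × V,
      if uv.1 = b ∨ uv.1 = c then 0
      else (d uv.1 : ℝ) * p uv.1 uv.2 * |h uv.1 - h uv.2|)
    (W : TransRW d succ a)
    (m t : ℕ) (hm : (m : ℕ∞) ≤ W.M)
    (hpos : 0 < ntau W m t b + ntau W m t c + m) :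
    |h a - (ntau W m t b : ℝ) /
        ((ntau W m t b : ℝ) + (ntau W m t c : ℝ) + (m : ℝ))| ≤
      K₁ / ((ntau W m t b : ℝ) + (ntau W m t c : ℝ) + (m : ℝ)) := by
  classical
  have hd : ∀ v, 0 < d v := hreal.1
  have hb1 : h b = 1 := by rw [hh]; exact hitProb_b b c
  have hc0 : h c = 0 := by rw [hh]; exact hitProb_c b c hbc
  have hh01 : ∀ v, 0 ≤ h v ∧ h v ≤ 1 := fun v => by
    rw [hh]; exact ⟨hitProb_nonneg hreal b c v, hitProb_le_one hreal b c v⟩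
  have hharm : ∀ u, ¬(u = b ∨ u = c) →
      ∑ j ∈ Finset.range (d u), (h (succ u j) - h u) = 0 := by
    intro u hu
    push_neg at hu
    rw [hh]
    exact sum_e_zero hreal b c u hu.1 hu.2
  -- summability of the domination function
  set Fpair : V × V → ℝ := fun uv =>
    if uv.1 = b ∨ uv.1 = c then 0
    else (d uv.1 : ℝ) * p uv.1 uv.2 * |h uv.1 - h uv.2| with hFp
  have hFnn : 0 ≤ Fpair := by
    intro uv
    simp only [hFp, Pi.zero_apply]
    split_ifs
    · exact le_rfl
    · exact mul_nonneg (mul_nonneg (by positivity) (hreal.p_nonneg _ _)) (abs_nonneg _)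
  have hrow := (summable_prod_of_nonneg hFnn).1 hsum
  have hDrow : ∀ u, Dbd d succ h b c u = (1 / 2) * ∑' v, Fpair (u, v) := by
    intro u
    by_cases hu : u = b ∨ u = c
    · simp only [Dbd, if_pos hu, hFp]
      simp [if_pos hu]
    · simp only [Dbd, if_neg hu, hFp]
      congr 1
      have hFv : ∀ v, (d u : ℝ) * p u v * |h u - h v|
          = (d u : ℝ) * (p u v * |h u - h v|) := fun v => by ring
      rw [tsum_congr hFv, tsum_mul_left, hreal.tsum_mul u (fun v => |h u - h v|)]
      have hdu : ((d u : ℝ)) ≠ 0 := by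
        have := hd u; positivity
      rw [mul_div_cancel₀ _ hdu]
      exact Finset.sum_congr rfl fun j _ => abs_sub_comm _ _
  have hsumD : Summable (Dbd d succ h b c) := by
    have : Dbd d succ h b c = fun u => (1 / 2) * ∑' v, Fpair (u, v) := funext hDrow
    rw [this]
    exact (hrow.2).mul_left _
  have htsumD : ∑' u, Dbd d succ h b c u = (1 / 2) * ∑' uv : V × V, Fpair uv := by
    rw [tsum_congr hDrow, tsum_mul_left, Summable.tsum_prod' hsum hrow.1]
  have hK1' : K₁ = 1 + ∑' u, Dbd d succ h b c u := by rw [hK₁, htsumD]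
  -- stage equations
  have hcoe : ∀ m' : ℕ, m' < m → (m' : ℕ∞) < W.M := fun m' hm' =>
    lt_of_lt_of_le (by exact_mod_cast hm') hm
  have hwalkm := W.walk m hm
  have hstage : ∀ m', m' < m →
      -(h a) = (({s | W.X m' s = b}.ncard : ℝ)) * (h a - 1)
        + (({s | W.X m' s = c}.ncard : ℝ)) * h a
        + ∑' u, phiv d succ h b c (W.R m' 0)
            (fun v => {s | W.X m' s = v}.ncard) u := by
    intro m' hm'
    have hw' := W.walk m' (le_of_lt (hcoe m' hm'))
    have := stage_limit hw'.1 hd hdb hdc hsb hsc hb1 hc0 hbc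
      (W.transient m' (hcoe m' hm')) hlim hsumD hharm
    rw [hw'.2] at this
    exact this
  have hcur : h (W.X m t) - h a =
      (nvisits (W.X m) t b : ℝ) * (h a - 1) + (nvisits (W.X m) t c : ℝ) * h a +
      ∑' u, phiv d succ h b c (W.R m 0) (nvisits (W.X m) t) u := by
    have := walk_identity_tsum hwalkm.1 hd hdb hdc hsb hsc hb1 hc0 hbc t
    rw [hwalkm.2] at this
    exact this
  -- rotor recursion across stages
  have hrec : ∀ m' : ℕ, (m' : ℕ∞) < W.M → ∀ u,
      W.R (m' + 1) 0 u = (W.R m' 0 u + {s | W.X m' s = u}.ncard) % d u := by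
    intro m' hm' u
    obtain ⟨T₀, hT₀⟩ := W.limit m' hm' u
    obtain ⟨T₁, hT₁⟩ := Filter.eventually_atTop.1
      (nvisits_eventually (W.X m') u (W.transient m' hm' u))
    have h1 := hT₀ (max T₀ T₁) (le_max_left _ _)
    have h2 := hT₁ (max T₀ T₁) (le_max_right _ _)
    have h3 := rotor_formula (W.walk m' (le_of_lt hm')).1 (max T₀ T₁) u
    rw [h1, h2] at h3
    exact h3
  have h0M : (0 : ℕ∞) ≤ W.M := le_trans (by exact_mod_cast Nat.zero_le m) hm
  have hcum : ∀ k : ℕ, (k : ℕ∞) ≤ W.M → ∀ u,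
      W.R k 0 u = (W.R 0 0 u + ∑ m' ∈ Finset.range k, {s | W.X m' s = u}.ncard) % d u := by
    intro k
    induction k with
    | zero =>
      intro _ u
      rw [Finset.range_zero, Finset.sum_empty, Nat.add_zero,
        Nat.mod_eq_of_lt ((W.walk 0 h0M).1.1 u)]
    | succ k ih =>
      intro hk u
      have hklt : (k : ℕ∞) < W.M :=
        lt_of_lt_of_le (by exact_mod_cast Nat.lt_succ_self k) hk
      rw [hrec k hklt u, ih (le_of_lt hklt) u, Nat.mod_add_mod, Finset.sum_range_succ,
        ← Nat.add_assoc]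
  -- combining per-stage discrepancies
  have hstageG : ∀ u, ¬(u = b ∨ u = c) → ∀ k : ℕ, (k : ℕ∞) ≤ W.M →
      Gf (fun j => h (succ u j) - h u) (d u) (W.R 0 0 u)
          (∑ m' ∈ Finset.range k, {s | W.X m' s = u}.ncard)
        = ∑ m' ∈ Finset.range k, Gf (fun j => h (succ u j) - h u) (d u) (W.R m' 0 u)
            ({s | W.X m' s = u}.ncard) := by
    intro u hu k
    induction k with
    | zero => intro _; simp [Gf_zero]
    | succ k ih =>
      intro hk
      have hklt : (k : ℕ∞) < W.M :=
        lt_of_lt_of_le (by exact_mod_cast Nat.lt_succ_self k) hk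
      rw [Finset.sum_range_succ, Finset.sum_range_succ, Gf_add, ih (le_of_lt hklt)]
      congr 1
      rw [hcum k (le_of_lt hklt) u]
      exact (Gf_mod _ _ _ _).symm
  have hPhi : ∀ u, phiv d succ h b c (W.R 0 0) (ntau W m t) u
      = (∑ m' ∈ Finset.range m, phiv d succ h b c (W.R m' 0)
          (fun v => {s | W.X m' s = v}.ncard) u)
        + phiv d succ h b c (W.R m 0) (nvisits (W.X m) t) u := by
    intro u
    unfold phiv
    split_ifs with hq
    · simp
    · rw [show ntau W m t u
        = (∑ m' ∈ Finset.range m, {s | W.X m' s = u}.ncard) + nvisits (W.X m) t u from rfl]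
      rw [Gf_add, hstageG u hq m hm]
      congr 1
      rw [hcum m hm u]
      exact (Gf_mod _ _ _ _).symm
  have hsummable_phiv : ∀ (ρ n : V → ℕ), Summable (phiv d succ h b c ρ n) := by
    intro ρ n
    refine Summable.of_norm_bounded hsumD fun u => ?_
    rw [Real.norm_eq_abs]
    exact abs_phiv_le hd hharm ρ n u
  have htsumPhi : ∑' u, phiv d succ h b c (W.R 0 0) (ntau W m t) u
      = (∑ m' ∈ Finset.range m, ∑' u, phiv d succ h b c (W.R m' 0)
          (fun v => {s | W.X m' s = v}.ncard) u)
        + ∑' u, phiv d succ h b c (W.R m 0) (nvisits (W.X m) t) u := by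
    rw [tsum_congr hPhi,
      Summable.tsum_add (summable_sum fun i _ => hsummable_phiv _ _) (hsummable_phiv _ _),
      Summable.tsum_finsetSum fun i _ => hsummable_phiv _ _]
  have habs : |∑' u, phiv d succ h b c (W.R 0 0) (ntau W m t) u|
      ≤ ∑' u, Dbd d succ h b c u := by
    have h1 : |∑' u, phiv d succ h b c (W.R 0 0) (ntau W m t) u|
        ≤ ∑' u, |phiv d succ h b c (W.R 0 0) (ntau W m t) u| := by
      rw [← Real.norm_eq_abs]
      refine (norm_tsum_le_tsum_norm ?_).trans_eq (tsum_congr fun u => Real.norm_eq_abs _)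
      exact (hsummable_phiv _ _).abs
    refine h1.trans (Summable.tsum_le_tsum (fun u => abs_phiv_le hd hharm _ _ u)
      (hsummable_phiv _ _).abs hsumD)
  -- sum the stage equations
  have stageEq : -((m : ℝ) * h a)
      = (∑ m' ∈ Finset.range m, ({s | W.X m' s = b}.ncard : ℝ)) * (h a - 1)
        + (∑ m' ∈ Finset.range m, ({s | W.X m' s = c}.ncard : ℝ)) * h a
        + ∑ m' ∈ Finset.range m, ∑' u, phiv d succ h b c (W.R m' 0)
            (fun v => {s | W.X m' s = v}.ncard) u := by
    have h1 : ∑ m' ∈ Finset.range m, (-(h a))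
        = ∑ m' ∈ Finset.range m, (({s | W.X m' s = b}.ncard : ℝ) * (h a - 1)
          + ({s | W.X m' s = c}.ncard : ℝ) * h a
          + ∑' u, phiv d succ h b c (W.R m' 0)
              (fun v => {s | W.X m' s = v}.ncard) u) :=
      Finset.sum_congr rfl fun m' hm' => hstage m' (Finset.mem_range.1 hm')
    rw [Finset.sum_const, Finset.card_range, nsmul_eq_mul, Finset.sum_add_distrib,
      Finset.sum_add_distrib, ← Finset.sum_mul, ← Finset.sum_mul] at h1
    linarith [h1]
  have hnb : (ntau W m t b : ℝ)
      = ∑ m' ∈ Finset.range m, ({s | W.X m' s = b}.ncard : ℝ)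
        + (nvisits (W.X m) t b : ℝ) := by
    rw [show ntau W m t b
      = (∑ m' ∈ Finset.range m, {s | W.X m' s = b}.ncard) + nvisits (W.X m) t b from rfl]
    push_cast
    ring
  have hnc : (ntau W m t c : ℝ)
      = ∑ m' ∈ Finset.range m, ({s | W.X m' s = c}.ncard : ℝ)
        + (nvisits (W.X m) t c : ℝ) := by
    rw [show ntau W m t c
      = (∑ m' ∈ Finset.range m, {s | W.X m' s = c}.ncard) + nvisits (W.X m) t c from rfl]
    push_cast
    ring
  have hkey : ((ntau W m t b : ℝ) + (ntau W m t c : ℝ) + (m : ℝ)) * h a - (ntau W m t b : ℝ)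
      = h (W.X m t) - h a - ∑' u, phiv d succ h b c (W.R 0 0) (ntau W m t) u := by
    rw [hnb, hnc]
    linear_combination -stageEq - hcur + htsumPhi
  have hbound : |((ntau W m t b : ℝ) + (ntau W m t c : ℝ) + (m : ℝ)) * h a
      - (ntau W m t b : ℝ)| ≤ K₁ := by
    rw [hkey, hK1']
    have h1 : |h (W.X m t) - h a| ≤ 1 := by
      obtain ⟨l1, l2⟩ := hh01 (W.X m t)
      obtain ⟨l3, l4⟩ := hh01 a
      rw [abs_le]
      constructor <;> linarith
    calc |h (W.X m t) - h a - ∑' u, phiv d succ h b c (W.R 0 0) (ntau W m t) u|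
        ≤ |h (W.X m t) - h a| + |∑' u, phiv d succ h b c (W.R 0 0) (ntau W m t) u| :=
          abs_sub _ _
      _ ≤ 1 + ∑' u, Dbd d succ h b c u := add_le_add h1 habs
  have hS : (0 : ℝ) < (ntau W m t b : ℝ) + (ntau W m t c : ℝ) + (m : ℝ) := by
    have : (0 : ℝ) < ((ntau W m t b + ntau W m t c + m : ℕ) : ℝ) := by exact_mod_cast hpos
    push_cast at this
    linarith
  have hrw : h a - (ntau W m t b : ℝ) /
        ((ntau W m t b : ℝ) + (ntau W m t c : ℝ) + (m : ℝ))
      = (((ntau W m t b : ℝ) + (ntau W m t c : ℝ) + (m : ℝ)) * h a - (ntau W m t b : ℝ)) /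
        ((ntau W m t b : ℝ) + (ntau W m t c : ℝ) + (m : ℝ)) := by
    field_simp
  rw [hrw, abs_div, abs_of_pos hS]
  exact (div_le_div_iff_of_pos_right hS).2 hbound
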